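/- Let V be a vector space of dimension at least n, and let g_1, ..., g_n be invertible linear maps on V with rank(g_i - 1) ≤ 1 for every i, such that the product g_1 g_2 ⋯ g_n equals the scalar μ · id. Then either μ = 1, or det(g_i) ≠ 1 and μ is an eigenvalue of each g_i (indeed det(g_i)'s nontrivial eigenvalue is μ for all i). -/

import Mathlib

section Aux

variable {K V : Type*} [Field K] [AddCommGroup V] [Module K V] [FiniteDimensional K V]

omit [FiniteDimensional K V] in
private lemma aux_list_prod_fix (l : List (Module.End K V)) (v : V)
    (h : ∀ x ∈ l, x v = v) : l.prod v = v := by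
  induction l with
  | nil => simp
  | cons a t ih =>
      rw [List.prod_cons, Module.End.mul_apply, ih (fun x hx => h x (List.mem_cons_of_mem _ hx))]
      exact h a List.mem_cons_self

private lemma aux_det_prodMap {M₁ M₂ : Type*} [AddCommGroup M₁] [Module K M₁]
    [FiniteDimensional K M₁] [AddCommGroup M₂] [Module K M₂] [FiniteDimensional K M₂]
    (f₁ : Module.End K M₁) (f₂ : Module.End K M₂) :
    LinearMap.det (f₁.prodMap f₂) = LinearMap.det f₁ * LinearMap.det f₂ := by
  classical
  let b₁ := Module.finBasis K M₁
  let b₂ := Module.finBasis K M₂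
  rw [← LinearMap.det_toMatrix (b₁.prod b₂), LinearMap.toMatrix_prodMap,
    Matrix.det_fromBlocks_zero₂₁, LinearMap.det_toMatrix, LinearMap.det_toMatrix]

private lemma aux_det_eq (f : Module.End K V) (hr : LinearMap.rank (f - 1) ≤ (1 : Cardinal))
    (μ : K) (hμ : μ ≠ 1) (v : V) (hv : v ≠ 0) (hfv : f v = μ • v) :
    LinearMap.det f = μ := by
  classical
  set W : Submodule K V := LinearMap.ker (f - 1) with hWdef
  set L : Submodule K V := K ∙ v with hLdef
  have hvW : v ∉ W := by
    intro h
    have h0 : f v - v = 0 := by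
      simpa [LinearMap.sub_apply] using (LinearMap.mem_ker.mp h)
    rw [hfv] at h0
    have h1 : (μ - 1) • v = 0 := by rw [sub_smul, one_smul]; exact h0
    rcases smul_eq_zero.mp h1 with h2 | h2
    · exact hμ (sub_eq_zero.mp h2)
    · exact hv h2
  have hdisj : Disjoint W L := (Submodule.disjoint_span_singleton' hv).mpr hvW
  -- finrank of W is at least finrank V - 1
  have hrange : Module.finrank K (LinearMap.range (f - 1)) ≤ 1 := by
    have h1 := Cardinal.toNat_le_toNat hr Cardinal.one_lt_aleph0
    simpa [Module.finrank, LinearMap.rank] using h1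
  have hkr := LinearMap.finrank_range_add_finrank_ker (f - 1)
  rw [← hWdef] at hkr
  have hLrank : Module.finrank K L = 1 := finrank_span_singleton hv
  have hsupinf := Submodule.finrank_sup_add_finrank_inf_eq W L
  rw [hdisj.eq_bot, finrank_bot, add_zero, hLrank] at hsupinf
  have hsuple : Module.finrank K ↥(W ⊔ L) ≤ Module.finrank K V := Submodule.finrank_le _
  have hsup : W ⊔ L = ⊤ := by
    apply Submodule.eq_top_of_finrank_eq
    omega
  have hcompl : IsCompl W L := ⟨hdisj, codisjoint_iff.mpr hsup⟩
  set e := Submodule.prodEquivOfIsCompl W L hcompl with hedef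
  set f₀ := LinearMap.prodMap (LinearMap.id : W →ₗ[K] W) (μ • LinearMap.id : L →ₗ[K] L)
    with hf₀def
  have hfeq : f = (e : W × L →ₗ[K] V) ∘ₗ f₀ ∘ₗ (e.symm : V →ₗ[K] W × L) := by
    apply LinearMap.ext
    intro x
    have hx : ((e.symm x).1 : V) + ((e.symm x).2 : V) = x := by
      have := e.apply_symm_apply x
      rwa [hedef, Submodule.coe_prodEquivOfIsCompl'] at this
    have hW1 : f ((e.symm x).1 : V) = ((e.symm x).1 : V) := by
      have hm : (f - 1) ((e.symm x).1 : V) = 0 := (e.symm x).1.2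
      rw [LinearMap.sub_apply, Module.End.one_apply] at hm
      exact sub_eq_zero.mp hm
    have hL2 : f ((e.symm x).2 : V) = μ • ((e.symm x).2 : V) := by
      obtain ⟨c, hc⟩ := Submodule.mem_span_singleton.mp (e.symm x).2.2
      rw [← hc, map_smul, hfv, smul_comm]
    calc f x = f (((e.symm x).1 : V) + ((e.symm x).2 : V)) := by rw [hx]
      _ = ((e.symm x).1 : V) + μ • ((e.symm x).2 : V) := by rw [map_add, hW1, hL2]
      _ = (e : W × L →ₗ[K] V) (f₀ (e.symm x)) := by
          rw [hf₀def, hedef]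
          simp [Submodule.coe_prodEquivOfIsCompl', LinearMap.prodMap_apply]
  rw [hfeq]
  have := LinearMap.det_conj f₀ e
  rw [this, hf₀def, aux_det_prodMap, LinearMap.det_id, LinearMap.det_smul, LinearMap.det_id,
    hLrank]
  ring

end Aux

/-- If `V` has dimension at least `n` and `g 1, ..., g n` are invertible endomorphisms
with `rank (g i - 1) ≤ 1` whose (ordered) product is the scalar `μ`, then either `μ = 1`
or, for every `i`, `det (g i) = μ` (the nontrivial eigenvalue of the pseudoreflection
`g i` is `μ`) and in particular `μ` is an eigenvalue of each `g i`. -/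
theorem jp_scalar_product_lemma {K V : Type*} [Field K] [AddCommGroup V] [Module K V]
    [FiniteDimensional K V] (n : ℕ) (hdim : n ≤ Module.finrank K V)
    (g : Fin n → Module.End K V) (hunit : ∀ i, IsUnit (g i))
    (hrank : ∀ i, LinearMap.rank (g i - 1) ≤ (1 : Cardinal))
    (μ : K) (hprod : (List.ofFn g).prod = μ • (1 : Module.End K V)) :
    μ = 1 ∨ ∀ i, LinearMap.det (g i) = μ ∧ Module.End.HasEigenvalue (g i) μ := by
  classical
  by_cases hμ : μ = 1
  · exact Or.inl hμ
  right
  intro i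
  set d := Module.finrank K V with hd
  set W : Fin n → Submodule K V := fun j => LinearMap.ker (g j - 1) with hWdef
  have hWrank : ∀ j, d ≤ Module.finrank K (W j) + 1 := by
    intro j
    show d ≤ Module.finrank K (LinearMap.ker (g j - 1)) + 1
    have hrange : Module.finrank K (LinearMap.range (g j - 1)) ≤ 1 := by
      have h1 := Cardinal.toNat_le_toNat (hrank j) Cardinal.one_lt_aleph0
      simpa [Module.finrank, LinearMap.rank] using h1
    have hkr := LinearMap.finrank_range_add_finrank_ker (g j - 1)
    omega
  -- intersection of fixed hyperplanes over a finset
  have hinf : ∀ s : Finset (Fin n),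
      d ≤ Module.finrank K ↥(⨅ j ∈ s, W j) + s.card := by
    intro s
    induction s using Finset.induction with
    | empty =>
        rw [show (⨅ j ∈ (∅ : Finset (Fin n)), W j) = ⊤ by simp, finrank_top]
        simp [hd]
    | @insert a s ha ih =>
        rw [Finset.iInf_insert]
        have h1 := Submodule.finrank_sup_add_finrank_inf_eq (W a) (⨅ j ∈ s, W j)
        have h2 : Module.finrank K ↥(W a ⊔ ⨅ j ∈ s, W j) ≤ d := Submodule.finrank_le _
        have h3 := hWrank a
        rw [Finset.card_insert_of_notMem ha]
        omega
  have hkey := hinf (Finset.univ.erase i)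
  simp only [Finset.card_erase_of_mem (Finset.mem_univ i), Finset.card_univ,
    Fintype.card_fin] at hkey
  have hn1 : 1 ≤ n := Nat.one_le_iff_ne_zero.mpr (by rintro rfl; exact i.elim0)
  have hpos : 0 < Module.finrank K ↥(⨅ j ∈ Finset.univ.erase i, W j) := by omega
  have hne : (⨅ j ∈ Finset.univ.erase i, W j) ≠ ⊥ := by
    intro h
    rw [h, finrank_bot] at hpos
    exact Nat.lt_irrefl 0 hpos
  obtain ⟨v, hvmem, hvne⟩ := Submodule.exists_mem_ne_zero_of_ne_bot hne
  have hvfix : ∀ j, j ≠ i → g j v = v := by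
    intro j hj
    have hv : v ∈ W j := by
      have := (Submodule.mem_iInf _).mp hvmem j
      exact (Submodule.mem_iInf _).mp this (Finset.mem_erase.mpr ⟨hj, Finset.mem_univ j⟩)
    have h0 : (g j - 1) v = 0 := hv
    rw [LinearMap.sub_apply, Module.End.one_apply] at h0
    exact sub_eq_zero.mp h0
  -- split the list product around position i
  have hilt : (i : ℕ) < (List.ofFn g).length := by rw [List.length_ofFn]; exact i.isLt
  have hdrop : (List.ofFn g).drop (i : ℕ) = g i :: (List.ofFn g).drop ((i : ℕ) + 1) := by
    rw [List.drop_eq_getElem_cons hilt]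
    congr 1
    simp [List.getElem_ofFn]
  have hsplit : ((List.ofFn g).take (i : ℕ)).prod *
      (g i * ((List.ofFn g).drop ((i : ℕ) + 1)).prod) = μ • (1 : Module.End K V) := by
    rw [← List.prod_cons, ← hdrop, List.prod_take_mul_prod_drop]
    exact hprod
  set A := ((List.ofFn g).take (i : ℕ)).prod with hAdef
  set B := ((List.ofFn g).drop ((i : ℕ) + 1)).prod with hBdef
  have hAfix : A v = v := by
    rw [hAdef]
    apply aux_list_prod_fix
    intro x hx
    obtain ⟨k, hk, hke⟩ := List.mem_take_iff_getElem.mp hx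
    have hki : k < (i : ℕ) := lt_of_lt_of_le hk inf_le_left
    rw [List.getElem_ofFn] at hke
    rw [← hke]
    refine hvfix _ ?_ 
    intro h
    have hval := congrArg Fin.val h
    simp only [Fin.val_mk] at hval
    omega
  have hBfix : B v = v := by
    rw [hBdef]
    apply aux_list_prod_fix
    intro x hx
    obtain ⟨k, hk, hke⟩ := List.mem_drop_iff_getElem.mp hx
    rw [List.getElem_ofFn] at hke
    rw [← hke]
    refine hvfix _ ?_ 
    intro h
    have hval := congrArg Fin.val h
    simp only [Fin.val_mk] at hval
    omega
  have hAunit : IsUnit A := by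
    rw [hAdef]
    apply List.prod_isUnit
    intro x hx
    obtain ⟨j, hj⟩ := List.mem_ofFn.mp (List.take_subset _ _ hx)
    exact hj ▸ hunit j
  have hAinj : Function.Injective A := by
    obtain ⟨u, hu⟩ := hAunit
    rw [← hu]
    intro x y hxy
    have h1 : ((↑u⁻¹ : Module.End K V) * (↑u : Module.End K V)) x
        = ((↑u⁻¹ : Module.End K V) * (↑u : Module.End K V)) y := by
      rw [Module.End.mul_apply, Module.End.mul_apply, hxy]
    rwa [u.inv_mul, Module.End.one_apply, Module.End.one_apply] at h1
  have hgi : g i v = μ • v := by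
    have h1 : A (g i (B v)) = μ • v := by
      have := congrArg (fun φ : Module.End K V => φ v) hsplit
      simpa [Module.End.mul_apply] using this
    rw [hBfix] at h1
    have h2 : A (μ • v) = μ • v := by rw [map_smul, hAfix]
    exact hAinj (h1.trans h2.symm)
  refine ⟨aux_det_eq (g i) (hrank i) μ hμ v hvne hgi, ?_⟩
  exact Module.End.hasEigenvalue_of_hasEigenvector
    ⟨Module.End.mem_eigenspace_iff.mpr hgi, hvne⟩
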